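/- Let s > 0, a ∈ (0,1), and let (y_t, u_t, v_t)_{t≥0} be the unique solution of the system y' = s y(1−y)/(y+(1+s)(1−y)), u' = u/2 + (u+v)y/2 − u/(y+(1+s)(1−y)), v' = v/2 + (u+v)(1−y)/2 − (1+s)v/(y+(1+s)(1−y)) with initial condition (a, a, 0). Then as t → ∞, (y_t, u_t, v_t) converges to (1, a^{(1+s)/(2s)} (1−a)^{−1/(2s)} ∫_a^1 (1−x)^{1/(2s)} x^{−(1+s)/(2s)} (1/2 + 1/(2s(1−x))) dx, 0). -/

import Mathlib

set_option maxHeartbeats 1000000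


open MeasureTheory Filter

/-- The drift function `g` of the dynamical system
`y' = s y(1−y)/(y+(1+s)(1−y))`,
`u' = u/2 + (u+v)y/2 − u/(y+(1+s)(1−y))`,
`v' = v/2 + (u+v)(1−y)/2 − (1+s)v/(y+(1+s)(1−y))`. -/
noncomputable def gdrift (s : ℝ) (p : ℝ × ℝ × ℝ) : ℝ × ℝ × ℝ :=
  (s * p.1 * (1 - p.1) / (p.1 + (1 + s) * (1 - p.1)),
   p.2.1 / 2 + (p.2.1 + p.2.2) * p.1 / 2 - p.2.1 / (p.1 + (1 + s) * (1 - p.1)),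
   p.2.2 / 2 + (p.2.1 + p.2.2) * (1 - p.1) / 2 -
     (1 + s) * p.2.2 / (p.1 + (1 + s) * (1 - p.1)))

/-- A solution of the dynamical system on `[0,∞)` with values in `[0,1]³` and
initial condition `(a, a, 0)`. -/
def IsSolSys (s a : ℝ) (z : ℝ → ℝ × ℝ × ℝ) : Prop :=
  z 0 = (a, a, 0) ∧ ∀ t ∈ Set.Ici (0 : ℝ),
    z t ∈ Set.Icc (0 : ℝ) 1 ×ˢ Set.Icc (0 : ℝ) 1 ×ˢ Set.Icc (0 : ℝ) 1 ∧
    HasDerivWithinAt z (gdrift s (z t)) (Set.Ici 0) t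

/-- The integral `∫_a^y (1−x)^{1/(2s)} x^{−(1+s)/(2s)} (1/2 + 1/(2s(1−x))) dx`. -/
noncomputable def intI (s a y : ℝ) : ℝ :=
  ∫ x in a..y, (1 - x) ^ (1 / (2 * s)) / x ^ ((1 + s) / (2 * s)) *
    (1 / 2 + 1 / (2 * s) * (1 / (1 - x)))

/-- `u` expressed as a function of `y`:
`u = y ⬝ a^{(1+s)/(2s)} (1−a)^{−1/(2s)} [(1−y)^{1/(2s)} y^{−(1+s)/(2s)} + ∫_a^y ⋯ dx]`. -/
noncomputable def uval (s a y : ℝ) : ℝ :=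
  y * (a ^ ((1 + s) / (2 * s)) / (1 - a) ^ (1 / (2 * s))) *
    ((1 - y) ^ (1 / (2 * s)) / y ^ ((1 + s) / (2 * s)) + intI s a y)

/-- `v` expressed as a function of `y`:
`v = (1−y) ⬝ a^{(1+s)/(2s)} (1−a)^{−1/(2s)} ∫_a^y ⋯ dx`. -/
noncomputable def vval (s a y : ℝ) : ℝ :=
  (1 - y) * (a ^ ((1 + s) / (2 * s)) / (1 - a) ^ (1 / (2 * s))) * intI s a y

noncomputable def gfun (s x : ℝ) : ℝ :=
  (1 - x) ^ (1 / (2 * s)) / x ^ ((1 + s) / (2 * s)) *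
    (1 / 2 + 1 / (2 * s) * (1 / (1 - x)))

lemma gfun_contOn (s : ℝ) : ContinuousOn (gfun s) (Set.Ioo 0 1) := by
  apply ContinuousOn.mul
  · apply ContinuousOn.div
    · exact (continuousOn_const.sub continuousOn_id).rpow_const
        fun x hx => Or.inl (sub_ne_zero.mpr (ne_of_lt hx.2).symm)
    · exact continuousOn_id.rpow_const fun x hx => Or.inl (ne_of_gt hx.1)
    · exact fun x hx => (Real.rpow_pos_of_pos hx.1 _).ne'
  · exact continuousOn_const.add (continuousOn_const.mul
      (continuousOn_const.div (continuousOn_const.sub continuousOn_id)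
        fun x hx => sub_ne_zero.mpr (ne_of_gt hx.2)))

lemma gfun_integrable {s a : ℝ} (hs : 0 < s) (ha : a ∈ Set.Ioo (0:ℝ) 1) :
    IntervalIntegrable (gfun s) volume a 1 := by
  have hα : 0 < 1 / (2 * s) := by positivity
  -- integrable piece (1-x)^(α-1)
  have h2 : IntervalIntegrable (fun x : ℝ => (1 - x) ^ (1 / (2 * s) - 1)) volume a 1 := by
    have := (intervalIntegral.intervalIntegrable_rpow' (a := 1 - a) (b := 0)
      (r := 1 / (2 * s) - 1) (by linarith)).comp_sub_left 1
    simpa using this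
  have h3 : IntervalIntegrable
      (fun x : ℝ => (1 - x) ^ (1 / (2 * s) - 1) * (1 / (2 * s) / x ^ ((1 + s) / (2 * s))))
      volume a 1 := by
    apply h2.mul_continuousOn
    apply ContinuousOn.div continuousOn_const
    · exact continuousOn_id.rpow_const fun x hx => Or.inl
        (by rw [Set.uIcc_of_le ha.2.le] at hx; exact (lt_of_lt_of_le ha.1 hx.1).ne')
    · intro x hx
      rw [Set.uIcc_of_le ha.2.le] at hx
      exact (Real.rpow_pos_of_pos (lt_of_lt_of_le ha.1 hx.1) _).ne'
  have h1 : IntervalIntegrable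
      (fun x : ℝ => (1 - x) ^ (1 / (2 * s)) / x ^ ((1 + s) / (2 * s)) * (1 / 2))
      volume a 1 := by
    apply ContinuousOn.intervalIntegrable
    apply ContinuousOn.mul _ continuousOn_const
    apply ContinuousOn.div
    · exact (continuousOn_const.sub continuousOn_id).rpow_const fun x hx => Or.inr hα.le
    · exact continuousOn_id.rpow_const fun x hx => Or.inl
        (by rw [Set.uIcc_of_le ha.2.le] at hx; exact (lt_of_lt_of_le ha.1 hx.1).ne')
    · intro x hx
      rw [Set.uIcc_of_le ha.2.le] at hx
      exact (Real.rpow_pos_of_pos (lt_of_lt_of_le ha.1 hx.1) _).ne'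
  have hsum := h1.add h3
  rw [intervalIntegrable_iff_integrableOn_Ioo_of_le ha.2.le] at hsum ⊢
  apply hsum.congr_fun _ measurableSet_Ioo
  intro x hx
  have hx1 : (1:ℝ) - x ≠ 0 := sub_ne_zero.mpr (ne_of_gt hx.2)
  have h1x : (0:ℝ) < 1 - x := by linarith [hx.2]
  unfold gfun
  simp only
  rw [Real.rpow_sub h1x, Real.rpow_one]
  have hxpos : (0:ℝ) < x := lt_trans ha.1 hx.1
  have hB : x ^ ((1 + s) / (2 * s)) ≠ 0 := (Real.rpow_pos_of_pos hxpos _).ne'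
  field_simp

lemma intI_hasDerivAt {s a Y : ℝ} (hs : 0 < s) (ha : a ∈ Set.Ioo (0:ℝ) 1)
    (hY : Y ∈ Set.Ioo (0:ℝ) 1) : HasDerivAt (intI s a) (gfun s Y) Y := by
  have hsub : Set.uIcc a Y ⊆ Set.Ioo 0 1 :=
    Set.OrdConnected.uIcc_subset Set.ordConnected_Ioo ha hY
  have hint : IntervalIntegrable (gfun s) volume a Y :=
    ((gfun_contOn s).mono hsub).intervalIntegrable
  have : HasDerivAt (fun y => ∫ x in a..y, gfun s x) (gfun s Y) Y :=
    intervalIntegral.integral_hasDerivAt_right hint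
      ((gfun_contOn s).stronglyMeasurableAtFilter isOpen_Ioo Y hY)
      ((gfun_contOn s).continuousAt (isOpen_Ioo.mem_nhds hY))
  exact this

lemma uval_hasDerivAt {s a Y : ℝ} (hs : 0 < s) (ha : a ∈ Set.Ioo (0:ℝ) 1)
    (hY : Y ∈ Set.Ioo (0:ℝ) 1) :
    ∃ d, HasDerivAt (uval s a) d Y ∧
      d * (s * Y * (1 - Y) / (Y + (1 + s) * (1 - Y))) =
        uval s a Y / 2 + (uval s a Y + vval s a Y) * Y / 2 -
          uval s a Y / (Y + (1 + s) * (1 - Y)) := by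
  have hY0 : (0:ℝ) < Y := hY.1
  have hY1 : (0:ℝ) < 1 - Y := by linarith [hY.2]
  have hs' : (2:ℝ) * s ≠ 0 := by positivity
  have hB : (0:ℝ) < Y ^ ((1 + s) / (2 * s)) := Real.rpow_pos_of_pos hY0 _
  have hA : (0:ℝ) < (1 - Y) ^ (1 / (2 * s)) := Real.rpow_pos_of_pos hY1 _
  -- derivative of (1-y)^α
  have h1 : HasDerivAt (fun y : ℝ => (1 - y) ^ (1 / (2 * s)))
      (1 / (2 * s) * (1 - Y) ^ (1 / (2 * s) - 1) * (-1)) Y := by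
    have houter : HasDerivAt (fun x : ℝ => x ^ (1 / (2 * s)))
        (1 / (2 * s) * (1 - Y) ^ (1 / (2 * s) - 1)) (1 - Y) :=
      Real.hasDerivAt_rpow_const (Or.inl hY1.ne')
    have hinner : HasDerivAt (fun y : ℝ => 1 - y) (-1) Y := by
      simpa using (hasDerivAt_id Y).const_sub 1
    exact houter.comp Y hinner
  have h2 : HasDerivAt (fun y : ℝ => y ^ ((1 + s) / (2 * s)))
      ((1 + s) / (2 * s) * Y ^ ((1 + s) / (2 * s) - 1)) Y :=
    Real.hasDerivAt_rpow_const (Or.inl hY0.ne')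
  have h3 := intI_hasDerivAt hs ha hY
  have hq := (h1.div h2 hB.ne').add h3
  have hid := ((hasDerivAt_id Y).mul_const
      (a ^ ((1 + s) / (2 * s)) / (1 - a) ^ (1 / (2 * s))))
  have hmain := hid.mul hq
  refine ⟨_, hmain, ?_⟩
  -- now the algebraic identity
  rw [Real.rpow_sub hY1, Real.rpow_sub hY0, Real.rpow_one, Real.rpow_one]
  simp only [uval, vval, gfun, Pi.div_apply, Pi.add_apply, id]
  have hD : (0:ℝ) < Y + (1 + s) * (1 - Y) := by nlinarith
  set A := (1 - Y) ^ (1 / (2 * s)) with hAdef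
  set B := Y ^ ((1 + s) / (2 * s)) with hBdef
  set I := intI s a Y with hIdef
  set K := a ^ ((1 + s) / (2 * s)) / (1 - a) ^ (1 / (2 * s)) with hKdef
  have hsne : s ≠ 0 := hs.ne'
  field_simp
  ring

lemma vval_hasDerivAt {s a Y : ℝ} (hs : 0 < s) (ha : a ∈ Set.Ioo (0:ℝ) 1)
    (hY : Y ∈ Set.Ioo (0:ℝ) 1) :
    ∃ d, HasDerivAt (vval s a) d Y ∧
      d * (s * Y * (1 - Y) / (Y + (1 + s) * (1 - Y))) =
        vval s a Y / 2 + (uval s a Y + vval s a Y) * (1 - Y) / 2 -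
          (1 + s) * vval s a Y / (Y + (1 + s) * (1 - Y)) := by
  have hY0 : (0:ℝ) < Y := hY.1
  have hY1 : (0:ℝ) < 1 - Y := by linarith [hY.2]
  have hB : (0:ℝ) < Y ^ ((1 + s) / (2 * s)) := Real.rpow_pos_of_pos hY0 _
  have h3 := intI_hasDerivAt hs ha hY
  have hinner : HasDerivAt (fun y : ℝ => 1 - y) (-1) Y := by
    simpa using (hasDerivAt_id Y).const_sub 1
  have hmain := (hinner.mul_const
      (a ^ ((1 + s) / (2 * s)) / (1 - a) ^ (1 / (2 * s)))).mul h3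
  refine ⟨_, hmain, ?_⟩
  simp only [uval, vval, gfun]
  have hD : (0:ℝ) < Y + (1 + s) * (1 - Y) := by nlinarith
  set A := (1 - Y) ^ (1 / (2 * s)) with hAdef
  set B := Y ^ ((1 + s) / (2 * s)) with hBdef
  set I := intI s a Y with hIdef
  set K := a ^ ((1 + s) / (2 * s)) / (1 - a) ^ (1 / (2 * s)) with hKdef
  have hsne : s ≠ 0 := hs.ne'
  field_simp
  ring

noncomputable def Ffield (s Yt : ℝ) (p : ℝ × ℝ) : ℝ × ℝ :=
  (p.1 / 2 + (p.1 + p.2) * Yt / 2 - p.1 / (Yt + (1 + s) * (1 - Yt)),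
   p.2 / 2 + (p.1 + p.2) * (1 - Yt) / 2 -
     (1 + s) * p.2 / (Yt + (1 + s) * (1 - Yt)))

lemma Ffield_lipschitz {s Yt : ℝ} (hs : 0 < s) (hY : Yt ∈ Set.Icc (0:ℝ) 1) :
    LipschitzWith (3 + s.toNNReal) (Ffield s Yt) := by
  have hD : (1:ℝ) ≤ Yt + (1 + s) * (1 - Yt) := by nlinarith [hY.1, hY.2]
  have hDpos : (0:ℝ) < Yt + (1 + s) * (1 - Yt) := lt_of_lt_of_le one_pos hD
  rw [lipschitzWith_iff_dist_le_mul]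
  intro p q
  have hcoe : ((3 + s.toNNReal : NNReal) : ℝ) = 3 + s := by
    simp [Real.coe_toNNReal _ hs.le]
  rw [Prod.dist_eq, hcoe, max_le_iff]
  have h1 : dist p.1 q.1 ≤ dist p q := le_max_left _ _
  have h2 : dist p.2 q.2 ≤ dist p q := le_max_right _ _
  rw [Real.dist_eq] at h1 h2
  have hm : (0:ℝ) ≤ dist p q := dist_nonneg
  have hYabs : |Yt| ≤ 1 := abs_le.mpr ⟨by linarith [hY.1], hY.2⟩
  have hYabs' : |1 - Yt| ≤ 1 := abs_le.mpr ⟨by linarith [hY.2], by linarith [hY.1]⟩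
  have habsum : |p.1 - q.1 + (p.2 - q.2)| ≤ 2 * dist p q :=
    (abs_add_le _ _).trans (by linarith)
  constructor
  · rw [Real.dist_eq]
    have e1 : (Ffield s Yt p).1 - (Ffield s Yt q).1 =
        (p.1 - q.1) / 2 + ((p.1 - q.1) + (p.2 - q.2)) * Yt / 2 -
          (p.1 - q.1) / (Yt + (1 + s) * (1 - Yt)) := by
      simp only [Ffield]; field_simp; ring
    rw [e1]
    have t1 := (abs_sub ((p.1 - q.1) / 2 + ((p.1 - q.1) + (p.2 - q.2)) * Yt / 2)
        ((p.1 - q.1) / (Yt + (1 + s) * (1 - Yt)))).trans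
      (add_le_add_left (abs_add_le ((p.1 - q.1) / 2)
        (((p.1 - q.1) + (p.2 - q.2)) * Yt / 2)) _)
    refine t1.trans ?_
    have b1 : |(p.1 - q.1) / 2| ≤ dist p q / 2 := by
      rw [abs_div, abs_two]; linarith [abs_nonneg (p.1 - q.1), h1]
    have b2 : |((p.1 - q.1) + (p.2 - q.2)) * Yt / 2| ≤ dist p q := by
      rw [abs_div, abs_mul, abs_two]
      have : |p.1 - q.1 + (p.2 - q.2)| * |Yt| ≤ 2 * dist p q * 1 :=
        mul_le_mul habsum hYabs (abs_nonneg _) (by linarith)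
      linarith
    have b3 : |(p.1 - q.1) / (Yt + (1 + s) * (1 - Yt))| ≤ dist p q := by
      rw [abs_div, abs_of_pos hDpos]
      exact (div_le_self (abs_nonneg _) hD).trans h1
    nlinarith
  · rw [Real.dist_eq]
    have e1 : (Ffield s Yt p).2 - (Ffield s Yt q).2 =
        (p.2 - q.2) / 2 + ((p.1 - q.1) + (p.2 - q.2)) * (1 - Yt) / 2 -
          (1 + s) * (p.2 - q.2) / (Yt + (1 + s) * (1 - Yt)) := by
      simp only [Ffield]; field_simp; ring
    rw [e1]
    have t1 := (abs_sub ((p.2 - q.2) / 2 + ((p.1 - q.1) + (p.2 - q.2)) * (1 - Yt) / 2)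
        ((1 + s) * (p.2 - q.2) / (Yt + (1 + s) * (1 - Yt)))).trans
      (add_le_add_left (abs_add_le ((p.2 - q.2) / 2)
        (((p.1 - q.1) + (p.2 - q.2)) * (1 - Yt) / 2)) _)
    refine t1.trans ?_
    have b1 : |(p.2 - q.2) / 2| ≤ dist p q / 2 := by
      rw [abs_div, abs_two]; linarith [abs_nonneg (p.2 - q.2), h2]
    have b2 : |((p.1 - q.1) + (p.2 - q.2)) * (1 - Yt) / 2| ≤ dist p q := by
      rw [abs_div, abs_mul, abs_two]
      have : |p.1 - q.1 + (p.2 - q.2)| * |1 - Yt| ≤ 2 * dist p q * 1 :=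
        mul_le_mul habsum hYabs' (abs_nonneg _) (by linarith)
      linarith
    have b3 : |(1 + s) * (p.2 - q.2) / (Yt + (1 + s) * (1 - Yt))| ≤
        (1 + s) * dist p q := by
      rw [abs_div, abs_of_pos hDpos, abs_mul, abs_of_pos (by linarith : (0:ℝ) < 1 + s)]
      refine (div_le_self (by positivity) hD).trans ?_
      exact mul_le_mul_of_nonneg_left h2 (by linarith)
    nlinarith

lemma intI_self (s a : ℝ) : intI s a a = 0 := intervalIntegral.integral_same

lemma uval_self {s a : ℝ} (hs : 0 < s) (ha : a ∈ Set.Ioo (0:ℝ) 1) :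
    uval s a a = a := by
  have hA : (0:ℝ) < (1 - a) ^ (1 / (2 * s)) :=
    Real.rpow_pos_of_pos (by linarith [ha.2]) _
  have hB : (0:ℝ) < a ^ ((1 + s) / (2 * s)) := Real.rpow_pos_of_pos ha.1 _
  unfold uval
  rw [intI_self, add_zero]
  field_simp
  rw [mul_assoc, mul_div_assoc, div_self (mul_pos (Real.rpow_pos_of_pos ha.1 _)
    (Real.rpow_pos_of_pos (by linarith [ha.2]) _)).ne', mul_one]

lemma vval_self (s a : ℝ) : vval s a a = 0 := by
  unfold vval; rw [intI_self, mul_zero]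

/-- The solution of the dynamical system started from `(a, a, 0)` converges, as
`t → ∞`, to `(1, a^{(1+s)/(2s)} (1−a)^{−1/(2s)} ∫_a^1 (1−x)^{1/(2s)} x^{−(1+s)/(2s)}
(1/2 + 1/(2s(1−x))) dx, 0)`. -/
theorem dynamical_system_limit_at_infinity
    (s a : ℝ) (hs : 0 < s) (ha : a ∈ Set.Ioo (0 : ℝ) 1)
    (z : ℝ → ℝ × ℝ × ℝ) (hz : IsSolSys s a z) :
    Tendsto z atTop
      (nhds (1, a ^ ((1 + s) / (2 * s)) / (1 - a) ^ (1 / (2 * s)) * intI s a 1, 0)) := by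
  obtain ⟨hz0, hzdyn⟩ := hz
  have ha0 := ha.1
  have ha1 := ha.2
  have hy0 : (z 0).1 = a := by rw [hz0]
  have hymem : ∀ t ∈ Set.Ici (0:ℝ), (z t).1 ∈ Set.Icc (0:ℝ) 1 :=
    fun t ht => ((hzdyn t ht).1).1
  have hDpos : ∀ t ∈ Set.Ici (0:ℝ), (0:ℝ) < (z t).1 + (1 + s) * (1 - (z t).1) := by
    intro t ht
    have h := hymem t ht
    nlinarith [h.1, h.2]
  -- derivative of the first component
  have hyderiv : ∀ t ∈ Set.Ici (0:ℝ), HasDerivWithinAt (fun t => (z t).1)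
      (s * (z t).1 * (1 - (z t).1) / ((z t).1 + (1 + s) * (1 - (z t).1)))
      (Set.Ici 0) t := by
    intro t ht
    exact (ContinuousLinearMap.fst ℝ ℝ (ℝ × ℝ)).hasFDerivAt.comp_hasDerivWithinAt t
      (hzdyn t ht).2
  -- monotonicity of y
  have hymono : MonotoneOn (fun t => (z t).1) (Set.Ici (0:ℝ)) := by
    apply monotoneOn_of_hasDerivWithinAt_nonneg (convex_Ici 0)
      (f' := fun t => s * (z t).1 * (1 - (z t).1) / ((z t).1 + (1 + s) * (1 - (z t).1)))
    · exact fun t ht => (hyderiv t ht).continuousWithinAt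
    · intro t ht
      rw [interior_Ici] at ht
      exact (hyderiv t (Set.mem_Ici.mpr (le_of_lt ht))).mono
        (by rw [interior_Ici]; exact fun x hx => Set.mem_Ici.mpr (le_of_lt hx))
    · intro t ht
      rw [interior_Ici] at ht
      have h := hymem t (Set.mem_Ici.mpr (le_of_lt ht))
      have hD := hDpos t (Set.mem_Ici.mpr (le_of_lt ht))
      exact div_nonneg (mul_nonneg (mul_nonneg hs.le h.1) (by linarith [h.2])) hD.le
  have hya : ∀ t ∈ Set.Ici (0:ℝ), a ≤ (z t).1 := by
    intro t ht
    have := hymono (Set.self_mem_Ici) ht ht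
    simpa [hy0] using this
  -- y stays < 1
  have hylt1 : ∀ t ∈ Set.Ici (0:ℝ), (z t).1 < 1 := by
    intro t ht
    have hmono2 : MonotoneOn (fun t => (1 - (z t).1) * Real.exp (s * t))
        (Set.Ici (0:ℝ)) := by
      apply monotoneOn_of_hasDerivWithinAt_nonneg (convex_Ici 0)
        (f' := fun t => -(s * (z t).1 * (1 - (z t).1) /
            ((z t).1 + (1 + s) * (1 - (z t).1))) * Real.exp (s * t) +
          (1 - (z t).1) * (Real.exp (s * t) * s))
      · intro τ hτ
        exact (((hyderiv τ hτ).const_sub 1).mul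
          (((Real.hasDerivAt_exp (s * τ)).comp τ (by simpa using (hasDerivAt_id τ).const_mul s)).hasDerivWithinAt)).continuousWithinAt
      · intro τ hτ
        rw [interior_Ici] at hτ
        have hexp : HasDerivAt (fun t : ℝ => Real.exp (s * t)) (Real.exp (s * τ) * s) τ :=
          (Real.hasDerivAt_exp (s * τ)).comp τ (by simpa using (hasDerivAt_id τ).const_mul s)
        exact ((((hyderiv τ (Set.mem_Ici.mpr (le_of_lt hτ))).const_sub 1).mul
          hexp.hasDerivWithinAt).mono (by rw [interior_Ici]; exact fun x hx => Set.mem_Ici.mpr (le_of_lt hx)))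
      · intro τ hτ
        rw [interior_Ici] at hτ
        have h := hymem τ (Set.mem_Ici.mpr (le_of_lt hτ))
        have hD := hDpos τ (Set.mem_Ici.mpr (le_of_lt hτ))
        have hE : (0:ℝ) < Real.exp (s * τ) := Real.exp_pos _
        have hfy : s * (z τ).1 * (1 - (z τ).1) / ((z τ).1 + (1 + s) * (1 - (z τ).1)) ≤
            s * (1 - (z τ).1) := by
          rw [div_le_iff₀ hD]
          nlinarith [h.1, h.2, mul_nonneg (mul_nonneg hs.le (by linarith : (0:ℝ) ≤ 1 + s))
            (sq_nonneg (1 - (z τ).1))]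
        nlinarith
    have h0 : (1 - a) * 1 ≤ (1 - (z t).1) * Real.exp (s * t) := by
      have := hmono2 Set.self_mem_Ici ht ht
      simpa [hy0] using this
    nlinarith [Real.exp_pos (s * t), h0]
  have hyIoo : ∀ t ∈ Set.Ici (0:ℝ), (z t).1 ∈ Set.Ioo (0:ℝ) 1 :=
    fun t ht => ⟨lt_of_lt_of_le ha0 (hya t ht), hylt1 t ht⟩
  -- limit of y
  have hmaxmem : ∀ t : ℝ, max t 0 ∈ Set.Ici (0:ℝ) := fun t => Set.mem_Ici.mpr (le_max_right _ _)
  have hmono3 : Monotone (fun t => (z (max t 0)).1) := by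
    intro t t' h
    exact hymono (hmaxmem t) (hmaxmem t') (max_le_max h le_rfl)
  have hbdd : BddAbove (Set.range fun t => (z (max t 0)).1) := by
    refine ⟨1, ?_⟩
    rintro x ⟨t, rfl⟩
    exact (hymem _ (hmaxmem t)).2
  set L := ⨆ t : ℝ, (z (max t 0)).1 with hLdef
  have hLlim : Tendsto (fun t => (z (max t 0)).1) atTop (nhds L) :=
    tendsto_atTop_ciSup hmono3 hbdd
  have hyL : Tendsto (fun t => (z t).1) atTop (nhds L) := by
    apply hLlim.congr'
    filter_upwards [eventually_ge_atTop (0:ℝ)] with t ht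
    rw [max_eq_left ht]
  have hyleL : ∀ t ∈ Set.Ici (0:ℝ), (z t).1 ≤ L := by
    intro t ht
    have := le_ciSup hbdd t
    rwa [max_eq_left ht] at this
  have hL1 : L ≤ 1 := ciSup_le fun t => (hymem _ (hmaxmem t)).2
  have hLa : a ≤ L := by
    have := le_ciSup hbdd 0
    simpa [hy0] using this
  have hLeq : L = 1 := by
    by_contra hne
    have hLlt : L < 1 := lt_of_le_of_ne hL1 hne
    set c := s * a * (1 - L) / (1 + s) with hc
    have hcpos : 0 < c := by
      exact div_pos (mul_pos (mul_pos hs ha0) (by linarith)) (by linarith)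
    have hgrow : MonotoneOn (fun t => (z t).1 - c * t) (Set.Ici (0:ℝ)) := by
      apply monotoneOn_of_hasDerivWithinAt_nonneg (convex_Ici 0)
        (f' := fun t => s * (z t).1 * (1 - (z t).1) /
          ((z t).1 + (1 + s) * (1 - (z t).1)) - c)
      · exact fun t ht => ((hyderiv t ht).sub
          ((hasDerivWithinAt_id t (Set.Ici (0:ℝ))).const_mul c)).continuousWithinAt
      · intro t ht
        rw [interior_Ici] at ht
        have h := ((hyderiv t (Set.mem_Ici.mpr (le_of_lt ht))).sub
          ((hasDerivWithinAt_id t (Set.Ici (0:ℝ))).const_mul c)).mono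
          (interior_subset (s := Set.Ici (0:ℝ)))
        rw [interior_Ici] at h ⊢
        simpa [mul_one, Pi.sub_def] using h
      · intro t ht
        rw [interior_Ici] at ht
        have h1 := hya t (Set.mem_Ici.mpr (le_of_lt ht))
        have h2 := hyleL t (Set.mem_Ici.mpr (le_of_lt ht))
        have hD := hDpos t (Set.mem_Ici.mpr (le_of_lt ht))
        have hDle : (z t).1 + (1 + s) * (1 - (z t).1) ≤ 1 + s := by
          have := (hymem t (Set.mem_Ici.mpr (le_of_lt ht))).1
          nlinarith
        rw [sub_nonneg, hc, div_le_div_iff₀ (by linarith) hD]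
        have h3 : a * (1 - L) ≤ (z t).1 * (1 - (z t).1) :=
          mul_le_mul h1 (by linarith) (by linarith) (by linarith)
        have h4 : a * (1 - L) * ((z t).1 + (1 + s) * (1 - (z t).1)) ≤
            (z t).1 * (1 - (z t).1) * (1 + s) :=
          mul_le_mul h3 hDle hD.le (mul_nonneg (by linarith) (by linarith))
        nlinarith [mul_le_mul_of_nonneg_left h4 hs.le]
    have hT : a ≤ (z ((2 - a) / c)).1 - c * ((2 - a) / c) := by
      have h0 : (0:ℝ) ≤ (2 - a) / c := div_nonneg (by linarith) hcpos.le
      have := hgrow Set.self_mem_Ici h0 h0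
      simpa [hy0] using this
    have hcc : c * ((2 - a) / c) = 2 - a := by field_simp
    rw [hcc] at hT
    have := (hymem ((2 - a) / c) (div_nonneg (by linarith) hcpos.le)).2
    linarith
  rw [hLeq] at hyL
  -- Step B : identify u and v along the flow
  have hww : ∀ T ∈ Set.Ici (0:ℝ),
      (z T).2 = (uval s a (z T).1, vval s a (z T).1) := by
    intro T hT
    have key : Set.EqOn (fun t => (z t).2)
        (fun t => (uval s a ((z (max t 0)).1), vval s a ((z (max t 0)).1)))
        (Set.Icc 0 T) := by
      apply ODE_solution_unique (v := fun t p => Ffield s ((z (max t 0)).1) p)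
        (K := 3 + s.toNNReal)
      · exact fun t => Ffield_lipschitz hs (hymem _ (hmaxmem t))
      · intro τ hτ
        exact continuous_snd.continuousAt.comp_continuousWithinAt
          (((hzdyn τ hτ.1).2.continuousWithinAt).mono (fun x hx => hx.1))
      · intro τ hτ
        have hd := ((hzdyn τ hτ.1).2).mono (Set.Ici_subset_Ici.mpr hτ.1)
        have hcomp := (ContinuousLinearMap.snd ℝ ℝ (ℝ × ℝ)).hasFDerivAt.comp_hasDerivWithinAt τ hd
        convert hcomp using 1
        · rfl
        rw [max_eq_left hτ.1]
        rfl
      · intro τ hτ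
        have hY := hyIoo (max τ 0) (hmaxmem τ)
        obtain ⟨du, hdu, _⟩ := uval_hasDerivAt hs ha hY
        obtain ⟨dv, hdv, _⟩ := vval_hasDerivAt hs ha hY
        have hYc : ContinuousWithinAt (fun t => (z (max t 0)).1) (Set.Icc 0 T) τ := by
          have h1 : ContinuousWithinAt (fun t : ℝ => max t 0) (Set.Icc 0 T) τ :=
            (continuous_id.max continuous_const).continuousWithinAt
          have h2 : ContinuousWithinAt (fun t => (z t).1) (Set.Ici 0) (max τ 0) :=
            continuous_fst.continuousAt.comp_continuousWithinAt
              ((hzdyn _ (hmaxmem τ)).2.continuousWithinAt)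
          exact ContinuousWithinAt.comp (f := fun t : ℝ => max t 0) h2 h1 (fun x _ => hmaxmem x)
        exact (ContinuousAt.comp_continuousWithinAt (f := fun t : ℝ => (z (max t 0)).1)
            hdu.continuousAt hYc).prodMk
          (ContinuousAt.comp_continuousWithinAt (f := fun t : ℝ => (z (max t 0)).1)
            hdv.continuousAt hYc)
      · intro τ hτ
        have hτ0 : (0:ℝ) ≤ τ := hτ.1
        have hY := hyIoo τ hτ0
        obtain ⟨du, hdu, hiu⟩ := uval_hasDerivAt hs ha hY
        obtain ⟨dv, hdv, hiv⟩ := vval_hasDerivAt hs ha hY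
        have hyd := hyderiv τ hτ0
        have hcu := (hdu.comp_hasDerivWithinAt τ hyd).mono (Set.Ici_subset_Ici.mpr hτ0)
        have hcv := (hdv.comp_hasDerivWithinAt τ hyd).mono (Set.Ici_subset_Ici.mpr hτ0)
        have hpair := hcu.prodMk hcv
        have hpair2 : HasDerivWithinAt
            (fun t => (uval s a ((z (max t 0)).1), vval s a ((z (max t 0)).1)))
            (du * (s * (z τ).1 * (1 - (z τ).1) / ((z τ).1 + (1 + s) * (1 - (z τ).1))),
             dv * (s * (z τ).1 * (1 - (z τ).1) / ((z τ).1 + (1 + s) * (1 - (z τ).1))))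
            (Set.Ici τ) τ := by
          apply hpair.congr
          · intro x hx
            rw [max_eq_left (le_trans hτ0 hx)]
            rfl
          · rw [max_eq_left hτ0]
            rfl
        have heq2 : (du * (s * (z τ).1 * (1 - (z τ).1) / ((z τ).1 + (1 + s) * (1 - (z τ).1))),
             dv * (s * (z τ).1 * (1 - (z τ).1) / ((z τ).1 + (1 + s) * (1 - (z τ).1)))) =
            Ffield s ((z (max τ 0)).1)
              ((fun t => (uval s a ((z (max t 0)).1), vval s a ((z (max t 0)).1))) τ) := by
          simp only [max_eq_left hτ0, Ffield, Prod.mk.injEq]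
          exact ⟨hiu, hiv⟩
        rw [heq2] at hpair2
        exact hpair2
      · have hmax0 : max (0:ℝ) 0 = 0 := max_self 0
        show (z 0).2 = (uval s a ((z (max 0 0)).1), vval s a ((z (max 0 0)).1))
        rw [hmax0, hz0]
        simp [uval_self hs ha, vval_self]
    have := key ⟨hT, le_rfl⟩
    simpa [max_eq_left (Set.mem_Ici.mp hT)] using this
  -- Step C : limits
  set K := a ^ ((1 + s) / (2 * s)) / (1 - a) ^ (1 / (2 * s)) with hK
  have ht1 : Tendsto (fun t => 1 - (z t).1) atTop (nhds 0) := by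
    have := hyL.const_sub 1
    simpa using this
  have htA : Tendsto (fun t => (1 - (z t).1) ^ (1 / (2 * s))) atTop (nhds 0) := by
    have hc : ContinuousAt (fun x : ℝ => x ^ (1 / (2 * s))) 0 :=
      Real.continuousAt_rpow_const 0 _ (Or.inr (by positivity))
    have h := hc.tendsto.comp ht1
    rw [Real.zero_rpow (show (1 / (2 * s)) ≠ 0 by positivity)] at h
    exact h
  have htB : Tendsto (fun t => ((z t).1) ^ ((1 + s) / (2 * s))) atTop (nhds 1) := by
    have hc : ContinuousAt (fun x : ℝ => x ^ ((1 + s) / (2 * s))) 1 :=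
      Real.continuousAt_rpow_const 1 _ (Or.inl one_ne_zero)
    have h := hc.tendsto.comp hyL
    rw [Real.one_rpow] at h
    exact h
  have htI : Tendsto (fun t => intI s a ((z t).1)) atTop (nhds (intI s a 1)) := by
    have hcont : ContinuousOn (fun y => intI s a y) (Set.uIcc a 1) :=
      intervalIntegral.continuousOn_primitive_interval' (gfun_integrable hs ha)
        Set.left_mem_uIcc
    have hcw : ContinuousWithinAt (fun y => intI s a y) (Set.uIcc a 1) 1 :=
      hcont 1 Set.right_mem_uIcc
    apply hcw.tendsto.comp
    rw [tendsto_nhdsWithin_iff]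
    refine ⟨hyL, ?_⟩
    filter_upwards [eventually_ge_atTop (0:ℝ)] with t ht
    rw [Set.uIcc_of_le (le_of_lt ha1)]
    exact ⟨hya t ht, (hylt1 t ht).le⟩
  have huu : Tendsto (fun t => uval s a ((z t).1)) atTop (nhds (K * intI s a 1)) := by
    have h : Tendsto (fun t => (z t).1 * K *
        ((1 - (z t).1) ^ (1 / (2 * s)) / ((z t).1) ^ ((1 + s) / (2 * s)) + intI s a ((z t).1)))
        atTop (nhds (1 * K * ((0:ℝ) / 1 + intI s a 1))) :=
      (hyL.mul (tendsto_const_nhds (x := K))).mul ((htA.div htB one_ne_zero).add htI)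
    have he : (1:ℝ) * K * ((0:ℝ) / 1 + intI s a 1) = K * intI s a 1 := by norm_num
    rw [he] at h
    exact h.congr (fun t => by rw [uval])
  have hvv : Tendsto (fun t => vval s a ((z t).1)) atTop (nhds 0) := by
    have h : Tendsto (fun t => (1 - (z t).1) * K * intI s a ((z t).1))
        atTop (nhds ((0:ℝ) * K * intI s a 1)) :=
      (ht1.mul (tendsto_const_nhds (x := K))).mul htI
    have he : (0:ℝ) * K * intI s a 1 = 0 := by ring
    rw [he] at h
    exact h.congr (fun t => by rw [vval])
  have hu : Tendsto (fun t => (z t).2.1) atTop (nhds (K * intI s a 1)) := by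
    apply huu.congr'
    filter_upwards [eventually_ge_atTop (0:ℝ)] with t ht
    exact (congrArg Prod.fst (hww t ht)).symm
  have hv : Tendsto (fun t => (z t).2.2) atTop (nhds 0) := by
    apply hvv.congr'
    filter_upwards [eventually_ge_atTop (0:ℝ)] with t ht
    exact (congrArg Prod.snd (hww t ht)).symm
  exact hyL.prodMk_nhds (hu.prodMk_nhds hv)
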